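/- Fix a finite set S ⊆ ℝ. Define an FS^op-module N over ℚ as follows: for a nonempty finite type E, N(E) is the free ℚ-vector space with basis the set {v : E → S | v is not identically zero}, and for a surjection φ : E → F, the pullback N(φ) : N(F) → N(E) sends the basis element w to the basis element w ∘ φ (which is not identically zero since φ is surjective). Then N is finitely generated in degrees ≤ |S|: each N(E) is finite-dimensional, and N(E) is spanned by the union, over surjections φ : E → F with |F| ≤ |S|, of the images of the maps N(φ). -/

import Mathlib

open CategoryTheory Opposite

/-- An object of the category `FS`: a nonempty finite type. -/
structure FSObj : Type 1 where
  carrier : Type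
  [fintype : Fintype carrier]
  [nonempty : Nonempty carrier]

attribute [instance] FSObj.fintype FSObj.nonempty

/-- The category `FS` of nonempty finite types with surjections. -/
instance : Category FSObj where
  Hom A B := {f : A.carrier → B.carrier // Function.Surjective f}
  id A := ⟨id, Function.surjective_id⟩
  comp f g := ⟨g.1 ∘ f.1, g.2.comp f.2⟩

/-- An `FSᵒᵖ`-module `N` over `ℚ` is generated in degrees `≤ m` if for every
object `E` of `FS`, the vector space `N(E)` is spanned by the images of the
pullback maps `N(φ) : N(F) → N(E)` over all surjections `φ : E → F` with `|F| ≤ m`. -/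
def GeneratedInDegreesLE (N : FSObjᵒᵖ ⥤ ModuleCat ℚ) (m : ℕ) : Prop :=
  ∀ E : FSObj, Submodule.span ℚ
    {x : N.obj (op E) | ∃ (F : FSObj) (φ : E ⟶ F) (y : N.obj (op F)),
      Fintype.card F.carrier ≤ m ∧ x = N.map φ.op y} = ⊤

/-- The type of functions `E → S` that are not identically zero
(for `S` a finite set of reals). -/
def NzFun (S : Finset ℝ) (E : FSObj) : Type :=
  {v : E.carrier → S // ∃ e, (v e : ℝ) ≠ 0}

/-- Pullback of a not-identically-zero function along a surjection is
not identically zero. -/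
def NzFun.pullback (S : Finset ℝ) {E F : FSObj} (φ : E ⟶ F) (w : NzFun S F) :
    NzFun S E :=
  ⟨w.1 ∘ φ.1, by
    obtain ⟨f, hf⟩ := w.2
    obtain ⟨e, he⟩ := φ.2 f
    exact ⟨e, by simp only [Function.comp_apply, he]; exact hf⟩⟩

/-- The `FSᵒᵖ`-module sending a nonempty finite type `E` to the free `ℚ`-vector
space on the set of not-identically-zero functions `v : E → S`, with pullback along
a surjection `φ : E → F` sending a basis element `w` to `w ∘ φ`. -/
noncomputable def resMod (S : Finset ℝ) : FSObjᵒᵖ ⥤ ModuleCat ℚ where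
  obj E := ModuleCat.of ℚ (NzFun S (unop E) →₀ ℚ)
  map {E E'} φ := ModuleCat.ofHom (Finsupp.lmapDomain ℚ ℚ (NzFun.pullback S φ.unop))
  map_id E := by
    show ModuleCat.ofHom (Finsupp.lmapDomain ℚ ℚ (NzFun.pullback S (𝟙 E : E ⟶ E).unop)) = _
    have h : NzFun.pullback S (𝟙 E : E ⟶ E).unop = id := by
      funext w; exact Subtype.ext rfl
    rw [h, Finsupp.lmapDomain_id]; rfl
  map_comp {E E' E''} φ φ' := by
    show ModuleCat.ofHom (Finsupp.lmapDomain ℚ ℚ (NzFun.pullback S (φ ≫ φ').unop)) = _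
    have h : NzFun.pullback S (φ ≫ φ').unop =
        NzFun.pullback S φ'.unop ∘ NzFun.pullback S φ.unop := by
      funext w; exact Subtype.ext rfl
    rw [h, Finsupp.lmapDomain_comp]; rfl

/-- the module `N` with `N(E)` free on the nonzero elements of `S^E`
is finitely generated in degrees `≤ |S|`. -/
theorem stmt_8 (S : Finset ℝ) :
    (∀ E : FSObj, FiniteDimensional ℚ ((resMod S).obj (op E))) ∧
      GeneratedInDegreesLE (resMod S) S.card := by
  classical
  constructor
  · intro E
    have : Finite (NzFun S E) := Subtype.finite
    have : Fintype (NzFun S E) := Fintype.ofFinite _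
    exact Module.Finite.of_basis (Finsupp.basisSingleOne (R := ℚ) (ι := NzFun S E))
  · intro E
    rw [eq_top_iff]
    have hb := (Finsupp.basisSingleOne (R := ℚ) (ι := NzFun S E)).span_eq
    refine le_trans (le_of_eq hb.symm) ?_
    apply Submodule.span_mono
    rintro _ ⟨v, rfl⟩
    simp only [Finsupp.coe_basisSingleOne]
    refine Set.mem_setOf.mpr ?_
    -- construct F, φ, w
    have inst1 : Fintype (Set.range v.1) := Set.fintypeRange _
    have inst2 : Nonempty (Set.range v.1) := ⟨⟨v.1 (Classical.arbitrary E.carrier), Set.mem_range_self _⟩⟩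
    refine ⟨⟨Set.range v.1⟩, ⟨fun e => ⟨v.1 e, Set.mem_range_self e⟩, ?_⟩,
      Finsupp.single ⟨Subtype.val, ?_⟩ 1, ?_, ?_⟩
    · rintro ⟨s, e, rfl⟩; exact ⟨e, rfl⟩
    · obtain ⟨e, he⟩ := v.2
      exact ⟨⟨v.1 e, Set.mem_range_self e⟩, he⟩
    · calc Fintype.card (Set.range v.1) ≤ Fintype.card S :=
            Fintype.card_le_of_injective Subtype.val Subtype.val_injective
        _ = S.card := Fintype.card_coe S
    · show Finsupp.single v 1 = Finsupp.lmapDomain ℚ ℚ _ (Finsupp.single _ 1)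
      rw [Finsupp.lmapDomain_apply]; erw [Finsupp.mapDomain_single]
      congr 1
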